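/- arXiv:1002.0372 — 2 statements merged into one kernel-verified Lean document; each statement's English description precedes it below -/
import Mathlib

section
/- For every complex number z with |z| < 1, the maximum over all complex ζ with |ζ| = 1 of Re(1/(z − ζ)) equals (1 − Re(z))/(1 − |z|²); that is, Re(1/(z − ζ)) ≤ (1 − Re z)/(1 − |z|²) for all ζ on the unit circle, and this bound is attained for some ζ with |ζ| = 1. -/
open Complex

/-- For `|z| < 1`, the maximum over `|ζ| = 1` of `Re(1/(z − ζ))` equals
`(1 − Re z)/(1 − |z|²)`. -/
theorem max_re_reciprocal_on_circle (z : ℂ) (hz : ‖z‖ < 1) :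
    IsGreatest {r : ℝ | ∃ ζ : ℂ, ‖ζ‖ = 1 ∧ r = (1 / (z - ζ)).re}
      ((1 - z.re) / (1 - ‖z‖ ^ 2)) := by
  have hs : ‖z‖ ^ 2 < 1 := by nlinarith [norm_nonneg z]
  have hd : (1 : ℝ) - ‖z‖ ^ 2 > 0 := by linarith
  have hsq : z.re ^ 2 + z.im ^ 2 = ‖z‖ ^ 2 := by
    rw [Complex.sq_norm, Complex.normSq_apply]; ring
  have hne : (1 : ℂ) - (starRingEnd ℂ) z ≠ 0 := by
    intro h
    have h1 : (starRingEnd ℂ) z = 1 := by linear_combination -h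
    have : ‖(starRingEnd ℂ) z‖ = 1 := by simp [h1]
    simp [Complex.norm_conj] at this
    linarith
  constructor
  · refine ⟨(z - 1) / (1 - (starRingEnd ℂ) z), ?_, ?_⟩
    · rw [norm_div]
      have : ‖1 - (starRingEnd ℂ) z‖ = ‖z - 1‖ := by
        rw [show (1 : ℂ) - (starRingEnd ℂ) z = (starRingEnd ℂ) (1 - z) by simp,
          Complex.norm_conj, show (1 : ℂ) - z = -(z - 1) by ring, norm_neg]
      rw [this, div_self]
      intro h
      have : z = 1 := by
        have := norm_eq_zero.mp h
        linear_combination this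
      rw [this] at hz; simp at hz
    · have key : (((1 : ℝ) - ‖z‖ ^ 2 : ℝ) : ℂ) = 1 - z * (starRingEnd ℂ) z := by
        rw [Complex.mul_conj]
        push_cast [← Complex.sq_norm]
        ring
      have hzz : z - (z - 1) / (1 - (starRingEnd ℂ) z)
          = (((1 : ℝ) - ‖z‖ ^ 2 : ℝ) : ℂ) / (1 - (starRingEnd ℂ) z) := by
        rw [key, eq_div_iff hne]
        field_simp
        ring
      rw [hzz, one_div, inv_div, Complex.div_ofReal_re]
      simp [Complex.sub_re, Complex.conj_re]
  · rintro r ⟨ζ, hζ, rfl⟩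
    have hζsq : ζ.re ^ 2 + ζ.im ^ 2 = 1 := by
      have := Complex.sq_norm ζ
      rw [hζ, Complex.normSq_apply] at this
      nlinarith
    have hne2 : z - ζ ≠ 0 := by
      intro h
      have : z = ζ := sub_eq_zero.mp h
      rw [this, hζ] at hz; linarith
    rw [one_div, Complex.inv_re, Complex.normSq_apply]
    have hnorm : (z - ζ).re * (z - ζ).re + (z - ζ).im * (z - ζ).im > 0 := by
      have := Complex.normSq_pos.mpr hne2
      rwa [Complex.normSq_apply] at this
    rw [div_le_div_iff₀ hnorm hd]
    simp only [Complex.sub_re, Complex.sub_im]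
    set a := z.re; set b := z.im; set c := ζ.re; set d := ζ.im
    set K : ℝ := a^2 + b^2 + 1 - 2*a with hKdef
    set P : ℝ := 2*a*(1-a) - (1 - (a^2+b^2)) with hPdef
    set Q : ℝ := 2*b*(1-a) with hQdef
    have hK : 0 ≤ K := by nlinarith [sq_nonneg (1-a), sq_nonneg b]
    have hPQ : P^2 + Q^2 = K^2 := by rw [hKdef, hPdef, hQdef]; ring
    have hCS : (P*c + Q*d)^2 ≤ (P^2 + Q^2) * (c^2 + d^2) := by
      nlinarith [sq_nonneg (P*d - Q*c)]
    have hle : P*c + Q*d ≤ K := by nlinarith [hK, hCS, hPQ, hζsq]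
    have h1 : (1 - a) * (c^2 + d^2 - 1) = 0 := by rw [hζsq]; ring
    have h2 : (1-a)*((a-c)*(a-c)+(b-d)*(b-d)) - (a-c)*(1-(a^2+b^2))
        = (K - (P*c+Q*d)) + (1-a)*(c^2+d^2-1) := by
      rw [hKdef, hPdef, hQdef]; ring
    rw [← hsq]
    linarith [h2, hle, h1]
end

section
/- There is an absolute constant C > 0 such that for every natural number N ≥ 1 and every complex number δ with |δ| ≤ N/2, one has | N(1 − |1 − δ/N|) − Re(δ) + (Im δ)²/(2N) | ≤ C·|δ|³/N². -/
open Complex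

set_option maxHeartbeats 1000000 in
/-- There is an absolute constant `C > 0` such that for every `N ≥ 1` and every complex `δ`
with `|δ| ≤ N/2`, `| N(1 − |1 − δ/N|) − Re(δ) + (Im δ)²/(2N) | ≤ C·|δ|³/N²`. -/
theorem rescaled_distance_expansion :
    ∃ C : ℝ, 0 < C ∧ ∀ N : ℕ, 1 ≤ N → ∀ δ : ℂ, ‖δ‖ ≤ N / 2 →
      |(N : ℝ) * (1 - ‖1 - δ / N‖) - δ.re + δ.im ^ 2 / (2 * N)|
        ≤ C * ‖δ‖ ^ 3 / N ^ 2 := by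
  refine ⟨4, by norm_num, ?_⟩
  intro N hN δ hδ
  set n : ℝ := (N : ℝ) with hn_def
  have hn1 : (1:ℝ) ≤ n := by
    rw [hn_def]; exact_mod_cast hN
  have hn0 : (0:ℝ) < n := lt_of_lt_of_le one_pos hn1
  have hNne : (N : ℂ) ≠ 0 := by
    exact_mod_cast Nat.cast_ne_zero.mpr (Nat.one_le_iff_ne_zero.mp hN)
  set z : ℂ := δ / (N : ℂ) with hz_def
  have hδz : δ = (N : ℂ) * z := by rw [hz_def, mul_div_assoc', mul_div_cancel_left₀ _ hNne]
  set r := ‖z‖ with hr_def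
  have hr0 : (0:ℝ) ≤ r := norm_nonneg z
  have habsδ : ‖δ‖ = n * r := by
    rw [hδz, norm_mul]
    simp [hn_def, hr_def]
  have hr_half : r ≤ 1/2 := by
    have h1 : n * r ≤ n / 2 := by rw [← habsδ]; simpa [hn_def] using hδ
    nlinarith
  set x := z.re with hx_def
  set y := z.im with hy_def
  have hr2 : r ^ 2 = x ^ 2 + y ^ 2 := by
    rw [hr_def, Complex.sq_norm, Complex.normSq_apply]
    ring
  have hx_le : |x| ≤ r := Complex.abs_re_le_norm z
  obtain ⟨hx1, hx2⟩ := abs_le.mp hx_le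
  set s := ‖1 - z‖ with hs_def
  have hs0 : (0:ℝ) ≤ s := norm_nonneg _
  have hs2 : s ^ 2 = 1 - 2*x + x^2 + y^2 := by
    rw [hs_def, Complex.sq_norm, Complex.normSq_apply]
    simp only [Complex.sub_re, Complex.sub_im, Complex.one_re, Complex.one_im]
    ring
  have hs_lb : 1/2 ≤ s := by
    have h1 := norm_add_le (1 - z) z
    simp only [sub_add_cancel, norm_one] at h1
    rw [← hs_def, ← hr_def] at h1
    linarith
  have hs_ub : s ≤ 3/2 := by
    have h1 : ‖1 - z‖ ≤ ‖(1:ℂ)‖ + ‖z‖ := by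
      simpa [sub_eq_add_neg] using norm_add_le 1 (-z)
    simp only [norm_one] at h1
    rw [← hs_def, ← hr_def] at h1
    linarith
  set u := s^2 - 1 with hu_def
  have hu_eq : u = -2*x + x^2 + y^2 := by rw [hu_def, hs2]; ring
  have hu_abs : |u| ≤ 5/2 * r := by
    rw [abs_le]
    constructor <;> nlinarith [hr2, sq_nonneg y, sq_nonneg x]
  set E := s - 1 - u/2 + u^2/8 with hE_def
  have hE : 8*(1+s)^3 * E = u^3 * (s+3) := by
    rw [hE_def, hu_def]; ring
  have hden : (0:ℝ) < 8*(1+s)^3 := by positivity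
  have hEeq : E = u^3 * (s+3) / (8*(1+s)^3) := by
    rw [eq_div_iff (ne_of_gt hden)]
    linarith [hE]
  have habsE : |E| ≤ |u|^3 / 6 := by
    rw [hEeq, abs_div, abs_mul, _root_.abs_pow]
    rw [abs_of_pos (by linarith : (0:ℝ) < s + 3), abs_of_pos hden]
    rw [div_le_div_iff₀ hden (by norm_num)]
    have hpoly : 6*(s+3) ≤ 8*(1+s)^3 := by nlinarith [hs_lb]
    calc |u|^3 * (s+3) * 6 = (6*(s+3)) * |u|^3 := by ring
      _ ≤ (8*(1+s)^3) * |u|^3 :=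
          mul_le_mul_of_nonneg_right hpoly (pow_nonneg (abs_nonneg u) 3)
      _ = |u|^3 * (8*(1+s)^3) := by ring
  have hu3 : |u|^3 ≤ (5/2 * r)^3 := pow_le_pow_left₀ (abs_nonneg u) hu_abs 3
  have hdecomp : 1 - s - x + y^2/2 = -E - x*(x^2+y^2)/2 + (x^2+y^2)^2/8 := by
    rw [hE_def, hu_eq]; ring
  clear_value z r x y s u E
  have hEb : |E| ≤ 125/48 * r^3 := by
    have h53 : (5/2*r)^3 = 125/8 * r^3 := by ring
    calc |E| ≤ |u|^3/6 := habsE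
      _ ≤ (5/2*r)^3/6 := by linarith
      _ = 125/48 * r^3 := by rw [h53]; ring
  have h2 : |x*(x^2+y^2)/2| ≤ r^3/2 := by
    rw [abs_div, abs_mul, _root_.abs_of_nonneg (by positivity : (0:ℝ) ≤ x^2+y^2)]
    rw [_root_.abs_of_nonneg (by norm_num : (0:ℝ) ≤ (2:ℝ))]
    have hxy : x^2 + y^2 = r^2 := hr2.symm
    rw [hxy]
    have := mul_le_mul_of_nonneg_right hx_le (sq_nonneg r)
    calc |x| * r^2 / 2 ≤ r * r^2 / 2 := by linarith
      _ = r^3/2 := by ring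
  have h3 : (x^2+y^2)^2/8 ≤ r^3/16 := by
    have hxy : x^2 + y^2 = r^2 := hr2.symm
    rw [hxy]
    have h4 : r^4 ≤ r^3 * (1/2) := by
      calc r^4 = r^3 * r := by ring
        _ ≤ r^3 * (1/2) := mul_le_mul_of_nonneg_left hr_half (pow_nonneg hr0 3)
    calc (r^2)^2/8 = r^4/8 := by ring
      _ ≤ r^3 * (1/2) / 8 := by linarith
      _ = r^3/16 := by ring
  have key : |1 - s - x + y^2/2| ≤ 4 * r^3 := by
    rw [hdecomp]
    have habs3 : |(x^2+y^2)^2/8| = (x^2+y^2)^2/8 := abs_of_nonneg (by positivity)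
    calc |-E - x*(x^2+y^2)/2 + (x^2+y^2)^2/8|
        ≤ |-E - x*(x^2+y^2)/2| + |(x^2+y^2)^2/8| := abs_add_le _ _
      _ ≤ (|(-E)| + |x*(x^2+y^2)/2|) + |(x^2+y^2)^2/8| := by
          linarith [abs_sub (-E) (x*(x^2+y^2)/2)]
      _ ≤ 125/48 * r^3 + r^3/2 + r^3/16 := by
          rw [abs_neg, habs3]; linarith
      _ ≤ 4 * r^3 := by nlinarith [pow_nonneg hr0 3]
  have hre : δ.re = n * x := by
    rw [hδz]
    simp [Complex.mul_re, hn_def, hx_def]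
  have him : δ.im = n * y := by
    rw [hδz]
    simp [Complex.mul_im, hn_def, hy_def]
  rw [habsδ, hre, him]
  have hL : n * (1 - s) - n * x + (n * y)^2/(2*n) = n * (1 - s - x + y^2/2) := by
    field_simp
  have hR : 4 * (n * r)^3 / n^2 = n * (4 * r^3) := by
    field_simp
  rw [hL, hR, abs_mul, abs_of_pos hn0]
  exact mul_le_mul_of_nonneg_left key hn0.le
end
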